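/- Let (R, m) be a discrete valuation ring of prime characteristic p > 0. Then the following are equivalent: (i) R is F-solid, i.e., R admits a nonzero p^{-1}-linear map; (ii) R is Frobenius split, i.e., R admits a p^{-1}-linear map φ with φ(1) = 1; (iii) R is split F-regular, i.e., for every nonzero c ∈ R there exist e ≥ 1 and an additive map φ : R → R with φ(a^{p^e} x) = a φ(x) for all a, x ∈ R and φ(c) = 1. -/

import Mathlib

universe u

section DVRFsolid

variable {p : ℕ} [Fact p.Prime] {R : Type u} [CommRing R] [IsDomain R]
  [IsDiscreteValuationRing R] [CharP R p]

/-- Dividing a `p^{-e}`-linear map by `ϖ ^ k` when all its values are divisible by `ϖ ^ k`. -/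
private lemma dvr_div_map (ϖ : R) (hϖ0 : ϖ ≠ 0) (q k : ℕ) (φ : R →+ R)
    (hφ : ∀ a x : R, φ (a ^ q * x) = a * φ x)
    (h : ∀ x, ϖ ^ k ∣ φ x) :
    ∃ ψ : R →+ R, (∀ a x : R, ψ (a ^ q * x) = a * ψ x) ∧ ∀ x, ϖ ^ k * ψ x = φ x := by
  have hk : (ϖ ^ k : R) ≠ 0 := pow_ne_zero _ hϖ0
  have key : ∀ x, ϖ ^ k * (h x).choose = φ x := fun x => ((h x).choose_spec).symm
  refine ⟨AddMonoidHom.mk' (fun x => (h x).choose) ?_, ?_, key⟩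
  · intro a b
    apply mul_left_cancel₀ hk
    rw [mul_add, key, key, key, map_add]
  · intro a x
    apply mul_left_cancel₀ hk
    show ϖ ^ k * (h (a ^ q * x)).choose = ϖ ^ k * (a * (h x).choose)
    rw [key, hφ, mul_left_comm, key]

/-- The set of values of a nonzero `p^{-e}`-linear map is an ideal, hence of the form
`(ϖ ^ k)` in a DVR. -/
private lemma dvr_exists_val (ϖ : R) (hϖ : Irreducible ϖ) (q : ℕ) (φ : R →+ R)
    (hφ : ∀ a x : R, φ (a ^ q * x) = a * φ x) (hne : ∃ x, φ x ≠ 0) :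
    ∃ k : ℕ, (∀ x, ϖ ^ k ∣ φ x) ∧ ∃ y, φ y = ϖ ^ k := by
  let I : Ideal R :=
    { carrier := Set.range φ
      add_mem' := by
        rintro _ _ ⟨x, rfl⟩ ⟨y, rfl⟩
        exact ⟨x + y, map_add φ x y⟩
      zero_mem' := ⟨0, map_zero φ⟩
      smul_mem' := by
        rintro a _ ⟨x, rfl⟩
        exact ⟨a ^ q * x, hφ a x⟩ }
  have hI : I ≠ ⊥ := by
    obtain ⟨x, hx⟩ := hne
    intro h
    apply hx
    have hmem : φ x ∈ I := ⟨x, rfl⟩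
    rw [h] at hmem
    exact (Ideal.mem_bot).mp hmem
  obtain ⟨k, hk⟩ := IsDiscreteValuationRing.ideal_eq_span_pow_irreducible hI hϖ
  refine ⟨k, ?_, ?_⟩
  · intro x
    have hmem : φ x ∈ I := ⟨x, rfl⟩
    rw [hk] at hmem
    exact Ideal.mem_span_singleton.mp hmem
  · have hmem : (ϖ ^ k : R) ∈ I := by
      rw [hk]; exact Ideal.mem_span_singleton_self _
    exact hmem

/-- Main induction: given a Frobenius splitting, every power of the uniformizer can be sent
to `1` by some `p^{-e}`-linear map. -/
private lemma dvr_split_pow (ϖ : R) (hϖ : Irreducible ϖ)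
    (φ : R →+ R) (hφ : ∀ a x : R, φ (a ^ p * x) = a * φ x) (h1 : φ 1 = 1) :
    ∀ n : ℕ, ∃ e : ℕ, 1 ≤ e ∧ ∃ θ : R →+ R,
      (∀ a x : R, θ (a ^ p ^ e * x) = a * θ x) ∧ θ (ϖ ^ n) = 1 := by
  have hp2 : 2 ≤ p := (Fact.out : p.Prime).two_le
  have hϖ0 : ϖ ≠ 0 := hϖ.ne_zero
  intro n
  induction n using Nat.strong_induction_on with
  | _ n ih =>
  rcases Nat.eq_zero_or_pos n with rfl | hn
  · exact ⟨1, le_refl 1, φ, by simpa [pow_one] using hφ, by simpa using h1⟩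
  · -- the map x ↦ φ (ϖ ^ n * x)
    set φn : R →+ R := φ.comp (AddMonoidHom.mulLeft (ϖ ^ n)) with hφndef
    have hφnapp : ∀ x, φn x = φ (ϖ ^ n * x) := fun x => rfl
    have hφnC : ∀ a x : R, φn (a ^ p * x) = a * φn x := by
      intro a x
      rw [hφnapp, hφnapp, mul_left_comm, hφ]
    have hval : φn (ϖ ^ (n * (p - 1))) = ϖ ^ n := by
      rw [hφnapp, ← pow_add]
      have hpq : ∃ q, p = q + 1 := ⟨p - 1, by omega⟩
      obtain ⟨q, hq⟩ := hpq
      have : n + n * (p - 1) = n * p := by subst hq; simp; ring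
      rw [this, pow_mul, ← mul_one ((ϖ ^ n) ^ p), hφ, h1, mul_one]
    have hφnne : ∃ x, φn x ≠ 0 := by
      refine ⟨ϖ ^ (n * (p - 1)), ?_⟩
      rw [hval]
      exact pow_ne_zero _ hϖ0
    obtain ⟨k, hdvd, y, hy⟩ := dvr_exists_val ϖ hϖ p φn hφnC hφnne
    have hkn : k ≤ n := by
      have hd := hdvd (ϖ ^ (n * (p - 1)))
      rw [hval] at hd
      exact (pow_dvd_pow_iff hϖ0 hϖ.not_isUnit).mp hd
    rcases lt_or_eq_of_le hkn with hlt | heq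
    · -- k < n: use induction and compose
      obtain ⟨e', he', θ', hθ'C, hθ'⟩ := ih k hlt
      refine ⟨e' + 1, by omega,
        θ'.comp (φ.comp (AddMonoidHom.mulLeft y)), ?_, ?_⟩
      · intro a x
        show θ' (φ (y * (a ^ p ^ (e' + 1) * x))) = a * θ' (φ (y * x))
        have : y * (a ^ p ^ (e' + 1) * x) = (a ^ p ^ e') ^ p * (y * x) := by
          rw [← pow_mul, ← pow_succ]
          ring
        rw [this, hφ, hθ'C]
      · show θ' (φ (y * ϖ ^ n)) = 1
        rw [mul_comm, ← hφnapp, hy, hθ']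
    · -- k = n: divide by ϖ ^ n
      subst heq
      obtain ⟨ψ, hψC, hψeq⟩ := dvr_div_map ϖ hϖ0 p k φn hφnC hdvd
      have hψ1 : ψ (ϖ ^ (k * (p - 1))) = 1 := by
        apply mul_left_cancel₀ (pow_ne_zero k hϖ0)
        rw [hψeq, hval, mul_one]
      refine ⟨1, le_refl 1, ψ.comp (AddMonoidHom.mulLeft (ϖ ^ (k * (p - 2)))), ?_, ?_⟩
      · intro a x
        show ψ (ϖ ^ (k * (p - 2)) * (a ^ p ^ 1 * x)) = a * ψ (ϖ ^ (k * (p - 2)) * x)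
        rw [pow_one, mul_left_comm, hψC]
      · show ψ (ϖ ^ (k * (p - 2)) * ϖ ^ k) = 1
        rw [← pow_add]
        have hpq : ∃ q, p = q + 2 := ⟨p - 2, by omega⟩
        obtain ⟨q, hq⟩ := hpq
        have : k * (p - 2) + k = k * (p - 1) := by subst hq; simp; ring
        rw [this, hψ1]

/-- Given a Frobenius splitting, every nonzero element can be sent to `1` by some
`p^{-e}`-linear map. -/
private lemma dvr_split_elem (φ : R →+ R)
    (hφ : ∀ a x : R, φ (a ^ p * x) = a * φ x) (h1 : φ 1 = 1)
    (c : R) (hc : c ≠ 0) :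
    ∃ e : ℕ, 1 ≤ e ∧ ∃ θ : R →+ R,
      (∀ a x : R, θ (a ^ p ^ e * x) = a * θ x) ∧ θ c = 1 := by
  obtain ⟨ϖ, hϖ⟩ := IsDiscreteValuationRing.exists_irreducible R
  obtain ⟨n, u, rfl⟩ := IsDiscreteValuationRing.eq_unit_mul_pow_irreducible hc hϖ
  obtain ⟨e, he, θ, hθC, hθ⟩ := dvr_split_pow ϖ hϖ φ hφ h1 n
  have hq1 : 1 ≤ p ^ e := Nat.one_le_pow _ _ (Fact.out : p.Prime).pos
  refine ⟨e, he, (AddMonoidHom.mulLeft ((u⁻¹ : Rˣ) : R)).comp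
    (θ.comp (AddMonoidHom.mulLeft ((u : R) ^ (p ^ e - 1)))), ?_, ?_⟩
  · intro a x
    show (↑u⁻¹ : R) * θ ((u : R) ^ (p ^ e - 1) * (a ^ p ^ e * x)) =
      a * ((↑u⁻¹ : R) * θ ((u : R) ^ (p ^ e - 1) * x))
    rw [mul_left_comm ((u : R) ^ (p ^ e - 1)), hθC, mul_left_comm]
  · show (↑u⁻¹ : R) * θ ((u : R) ^ (p ^ e - 1) * ((u : R) * ϖ ^ n)) = 1
    have : (u : R) ^ (p ^ e - 1) * ((u : R) * ϖ ^ n) = (u : R) ^ p ^ e * ϖ ^ n := by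
      rw [← mul_assoc, ← pow_succ, Nat.sub_add_cancel hq1]
    rw [this, hθC, hθ, mul_one]
    simp

end DVRFsolid

/-- **For a DVR of prime characteristic, F-solid, Frobenius split and split F-regular are
equivalent.**  Let `(R, 𝔪)` be a discrete valuation ring of prime characteristic `p`.  Then
the following are equivalent:
(i) `R` admits a nonzero `p⁻¹`-linear map;
(ii) `R` admits a `p⁻¹`-linear map `φ` with `φ 1 = 1` (Frobenius split);
(iii) for every nonzero `c ∈ R` there are `e ≥ 1` and an additive map `φ : R → R` with
`φ (a ^ (p ^ e) * x) = a * φ x` for all `a, x` and `φ c = 1` (split F-regular). -/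
theorem dvr_fsolid_iff_frobenius_split_iff_split_F_regular
    (p : ℕ) [Fact p.Prime]
    (R : Type u) [CommRing R] [IsDomain R] [IsDiscreteValuationRing R] [CharP R p] :
    ((∃ φ : R →+ R, (∀ a x : R, φ (a ^ p * x) = a * φ x) ∧ φ ≠ 0) ↔
      (∃ φ : R →+ R, (∀ a x : R, φ (a ^ p * x) = a * φ x) ∧ φ 1 = 1)) ∧
    ((∃ φ : R →+ R, (∀ a x : R, φ (a ^ p * x) = a * φ x) ∧ φ 1 = 1) ↔
      (∀ c : R, c ≠ 0 → ∃ e : ℕ, 1 ≤ e ∧ ∃ φ : R →+ R,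
        (∀ a x : R, φ (a ^ p ^ e * x) = a * φ x) ∧ φ c = 1)) := by
  obtain ⟨ϖ, hϖ⟩ := IsDiscreteValuationRing.exists_irreducible R
  have hϖ0 : ϖ ≠ 0 := hϖ.ne_zero
  constructor
  · constructor
    · -- (i) ⇒ (ii)
      rintro ⟨φ, hφ, hne⟩
      have hnex : ∃ x, φ x ≠ 0 := by
        by_contra h
        push_neg at h
        exact hne (by ext x; simpa using h x)
      obtain ⟨k, hdvd, y, hy⟩ := dvr_exists_val ϖ hϖ p φ (by simpa [pow_one] using hφ) hnex
      obtain ⟨ψ, hψC, hψeq⟩ := dvr_div_map ϖ hϖ0 p k φ (by simpa [pow_one] using hφ) hdvd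
      have hψy : ψ y = 1 := by
        apply mul_left_cancel₀ (pow_ne_zero k hϖ0)
        rw [hψeq, hy, mul_one]
      refine ⟨ψ.comp (AddMonoidHom.mulLeft y), ?_, ?_⟩
      · intro a x
        show ψ (y * (a ^ p * x)) = a * ψ (y * x)
        rw [mul_left_comm, hψC]
      · show ψ (y * 1) = 1
        rw [mul_one, hψy]
    · -- (ii) ⇒ (i)
      rintro ⟨φ, hφ, h1⟩
      refine ⟨φ, hφ, ?_⟩
      intro h
      rw [h] at h1
      simpa using h1
  · constructor
    · -- (ii) ⇒ (iii)
      rintro ⟨φ, hφ, h1⟩ c hc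
      exact dvr_split_elem φ hφ h1 c hc
    · -- (iii) ⇒ (ii)
      intro h
      obtain ⟨e, he, ψ, hψC, hψ1⟩ := h 1 one_ne_zero
      refine ⟨ψ.comp (iterateFrobenius R p (e - 1)).toAddMonoidHom, ?_, ?_⟩
      · intro a x
        show ψ (iterateFrobenius R p (e - 1) (a ^ p * x)) = a * ψ (iterateFrobenius R p (e - 1) x)
        rw [map_mul, iterateFrobenius_def, iterateFrobenius_def, ← pow_mul, ← pow_succ',
          Nat.sub_add_cancel he, hψC]
      · show ψ (iterateFrobenius R p (e - 1) 1) = 1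
        rw [map_one, hψ1]
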